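/- Empirical Rademacher complexity of the adversarially modified linear class (upper bound): Let x₁,…,xₙ ∈ ℝ^d, y₁,…,yₙ ∈ {−1,+1}, W > 0, ε > 0, and 1/p + 1/q = 1 with p, q ≥ 1. Define F = {x ↦ ⟨x, w⟩ : ‖w‖_p ≤ W} and F̃ = {(x,y) ↦ min_{‖x'−x‖_∞ ≤ ε} y⟨x', w⟩ : ‖w‖_p ≤ W}. Since min_{‖x'−x‖_∞ ≤ ε} y⟨x', w⟩ = y⟨x, w⟩ − ε‖w‖₁, the empirical Rademacher complexity satisfies R_S(F̃) ≤ R_S(F) + ε·W·d^{1/q}/√n, where R_S(H) = (1/n)·E_σ[sup_{h∈H} Σᵢ σᵢ h(xᵢ, yᵢ)] and σᵢ are i.i.d. uniform ±1 random variables. -/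

import Mathlib

open Finset


lemma holder_l1 {d : ℕ} (w : Fin d → ℝ) {p q : ℝ} (hp : 1 ≤ p) (hq : 1 ≤ q)
    (hpq : 1 / p + 1 / q = 1) :
    ∑ j, |w j| ≤ (d : ℝ) ^ (1 / q) * (∑ j, |w j| ^ p) ^ (1 / p) := by
  have hq0 : 0 < q := lt_of_lt_of_le one_pos hq
  have hp0 : 0 < p := lt_of_lt_of_le one_pos hp
  have h1q : 0 < 1 / q := by positivity
  have hp1 : 1 < p := by
    have : 1 / p < 1 := by linarith
    rwa [div_lt_one hp0] at this
  have hpq' : p.HolderConjugate q := Real.holderConjugate_iff.mpr ⟨hp1, by rw [← one_div, ← one_div]; exact hpq⟩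
  have h := Real.inner_le_Lp_mul_Lq (univ : Finset (Fin d)) (fun j => |w j|) (fun _ => 1) hpq'
  simp only [mul_one, abs_abs, abs_one, Real.one_rpow, Finset.sum_const, card_univ,
    Fintype.card_fin, nsmul_eq_mul] at h
  calc ∑ j, |w j| ≤ (∑ j, |w j| ^ p) ^ (1 / p) * (d : ℝ) ^ (1 / q) := h
    _ = (d : ℝ) ^ (1 / q) * (∑ j, |w j| ^ p) ^ (1 / p) := mul_comm _ _


lemma sInf_adv {d : ℕ} (x w : Fin d → ℝ) {y ε : ℝ} (hy : y = -1 ∨ y = 1) (hε : 0 < ε) :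
    sInf {t : ℝ | ∃ x' : Fin d → ℝ, (∀ j, |x' j - x j| ≤ ε) ∧ t = y * ∑ j, x' j * w j}
      = y * (∑ j, x j * w j) - ε * ∑ j, |w j| := by
  have hya : |y| = 1 := by rcases hy with h | h <;> simp [h]
  have hy2 : y * y = 1 := by rcases hy with h | h <;> simp [h]
  set S := {t : ℝ | ∃ x' : Fin d → ℝ, (∀ j, |x' j - x j| ≤ ε) ∧ t = y * ∑ j, x' j * w j}
  have hmem : (y * (∑ j, x j * w j) - ε * ∑ j, |w j|) ∈ S := by
    refine ⟨fun j => x j - ε * y * (if 0 ≤ w j then 1 else -1), fun j => ?_, ?_⟩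
    · have h1 : |x j - ε * y * (if 0 ≤ w j then 1 else -1) - x j|
          = ε * |y| * |if 0 ≤ w j then (1:ℝ) else -1| := by
        rw [show x j - ε * y * (if 0 ≤ w j then (1:ℝ) else -1) - x j
            = -(ε * y * (if 0 ≤ w j then 1 else -1)) by ring]
        rw [abs_neg, abs_mul, abs_mul, abs_of_pos hε]
      rw [h1, hya]
      split_ifs <;> simp
    · have hterm : ∀ j, (x j - ε * y * (if 0 ≤ w j then (1:ℝ) else -1)) * w j
          = x j * w j - ε * y * |w j| := by
        intro j; split_ifs with h
        · rw [abs_of_nonneg h]; ring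
        · rw [abs_of_neg (lt_of_not_ge h)]; ring
      simp_rw [hterm]
      rw [Finset.sum_sub_distrib, mul_sub, ← Finset.mul_sum]
      have : y * (ε * y * ∑ j, |w j|) = (y * y) * (ε * ∑ j, |w j|) := by ring
      rw [this, hy2, one_mul]
  have hlb : ∀ t ∈ S, y * (∑ j, x j * w j) - ε * ∑ j, |w j| ≤ t := by
    rintro t ⟨x', hx', rfl⟩
    have key : ∀ j, y * (x j * w j) - ε * |w j| ≤ y * (x' j * w j) := by
      intro j
      have h1 : |y * ((x' j - x j) * w j)| ≤ ε * |w j| := by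
        rw [abs_mul, hya, one_mul, abs_mul]
        exact mul_le_mul_of_nonneg_right (hx' j) (abs_nonneg _)
      have h2 := neg_abs_le (y * ((x' j - x j) * w j))
      nlinarith
    calc y * (∑ j, x j * w j) - ε * ∑ j, |w j|
        = ∑ j, (y * (x j * w j) - ε * |w j|) := by
          rw [Finset.sum_sub_distrib, ← Finset.mul_sum, ← Finset.mul_sum]
      _ ≤ ∑ j, y * (x' j * w j) := Finset.sum_le_sum fun j _ => key j
      _ = y * ∑ j, x' j * w j := by rw [Finset.mul_sum]
  exact le_antisymm (csInf_le ⟨_, hlb⟩ hmem) (le_csInf ⟨_, hmem⟩ hlb)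


lemma rad_sign_sq (n : ℕ) :
    ∑ σ : Fin n → Bool, (∑ i, (if σ i then (1:ℝ) else -1)) ^ 2 = 2 ^ n * n := by
  have hcross : ∀ i j : Fin n, i ≠ j →
      ∑ σ : Fin n → Bool, (if σ i then (1:ℝ) else -1) * (if σ j then 1 else -1) = 0 := by
    intro i j hij
    set f : (Fin n → Bool) → ℝ :=
      fun σ => (if σ i then (1:ℝ) else -1) * (if σ j then 1 else -1) with hf
    set g : (Fin n → Bool) → (Fin n → Bool) := fun σ => Function.update σ i (!σ i) with hg
    have hinv : Function.Involutive g := by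
      intro σ; funext k
      by_cases hk : k = i <;> simp [hg, Function.update, hk]
    have hneg : ∀ σ, f (g σ) = -f σ := by
      intro σ
      have h1 : g σ i = !σ i := by simp [hg]
      have h2 : g σ j = σ j := by simp [hg, Function.update, (Ne.symm hij)]
      rw [hf]; simp only [h1, h2]
      cases σ i <;> cases σ j <;> norm_num
    have hb := hinv.bijective.sum_comp f
    rw [Finset.sum_congr rfl (fun σ _ => hneg σ), Finset.sum_neg_distrib] at hb
    linarith
  have hterm : ∀ σ : Fin n → Bool,
      (∑ i, (if σ i then (1:ℝ) else -1)) ^ 2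
        = ∑ i, ∑ j, (if σ i then (1:ℝ) else -1) * (if σ j then 1 else -1) := by
    intro σ; rw [sq, Finset.sum_mul_sum]
  simp_rw [hterm]
  rw [Finset.sum_comm]
  have : ∀ i : Fin n, ∑ σ : Fin n → Bool,
      ∑ j, (if σ i then (1:ℝ) else -1) * (if σ j then 1 else -1) = 2 ^ n := by
    intro i
    rw [Finset.sum_comm]
    rw [Finset.sum_eq_single i]
    · have : ∀ σ : Fin n → Bool, (if σ i then (1:ℝ) else -1) * (if σ i then 1 else -1) = 1 := by
        intro σ; cases σ i <;> norm_num
      rw [Finset.sum_congr rfl (fun σ _ => this σ), Finset.sum_const, Finset.card_univ]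
      simp [Fintype.card_fun]
    · intro j _ hj
      exact hcross i j (Ne.symm hj)
    · intro h; exact absurd (Finset.mem_univ i) h
  rw [Finset.sum_congr rfl (fun i _ => this i), Finset.sum_const, Finset.card_univ,
    Fintype.card_fin, nsmul_eq_mul, mul_comm]

lemma sum_abs_signs_le (n : ℕ) :
    ∑ σ : Fin n → Bool, |∑ i, (if σ i then (1:ℝ) else -1)| ≤ 2 ^ n * Real.sqrt n := by
  set A := ∑ σ : Fin n → Bool, |∑ i, (if σ i then (1:ℝ) else -1)| with hA
  have hA0 : 0 ≤ A := Finset.sum_nonneg fun σ _ => abs_nonneg _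
  have hcs := Finset.sum_mul_sq_le_sq_mul_sq Finset.univ
    (fun σ : Fin n → Bool => |∑ i, (if σ i then (1:ℝ) else -1)|) (fun _ => 1)
  simp only [mul_one, one_pow, sq_abs, Finset.sum_const, Finset.card_univ, nsmul_eq_mul] at hcs
  rw [rad_sign_sq] at hcs
  have hcard : (Fintype.card (Fin n → Bool) : ℝ) = 2 ^ n := by simp [Fintype.card_fun]
  rw [hcard] at hcs
  have h2 : A ^ 2 ≤ (2 ^ n) ^ 2 * n := by rw [hA]; nlinarith [hcs]
  calc A = Real.sqrt (A ^ 2) := (Real.sqrt_sq hA0).symm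
    _ ≤ Real.sqrt ((2 ^ n) ^ 2 * n) := Real.sqrt_le_sqrt h2
    _ = 2 ^ n * Real.sqrt n := by
        rw [Real.sqrt_mul (by positivity), Real.sqrt_sq (by positivity)]

/-- Empirical Rademacher complexity of a set of value vectors on a sample of size `n`. -/
noncomputable def radComp {n : ℕ} (V : Set (Fin n → ℝ)) : ℝ :=
  (n : ℝ)⁻¹ * ((2 : ℝ) ^ n)⁻¹ *
    ∑ σ : Fin n → Bool,
      sSup {s : ℝ | ∃ v ∈ V, s = ∑ i, (if σ i then (1 : ℝ) else -1) * v i}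

theorem adversarial_linear_rademacher_bound
    {d n : ℕ} (hn : 0 < n)
    (x : Fin n → Fin d → ℝ) (y : Fin n → ℝ) (hy : ∀ i, y i = -1 ∨ y i = 1)
    (W ε p q : ℝ) (hW : 0 < W) (hε : 0 < ε)
    (hp : 1 ≤ p) (hq : 1 ≤ q) (hpq : 1 / p + 1 / q = 1) :
    radComp {v : Fin n → ℝ | ∃ w : Fin d → ℝ,
        (∑ j, |w j| ^ p) ^ (1 / p) ≤ W ∧
        ∀ i, v i = sInf {t : ℝ | ∃ x' : Fin d → ℝ,
          (∀ j, |x' j - x i j| ≤ ε) ∧ t = y i * ∑ j, x' j * w j}}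
      ≤ radComp {v : Fin n → ℝ | ∃ w : Fin d → ℝ,
            (∑ j, |w j| ^ p) ^ (1 / p) ≤ W ∧ ∀ i, v i = ∑ j, x i j * w j}
        + ε * W * (d : ℝ) ^ (1 / q) / Real.sqrt n := by
  have hq0 : 0 < q := lt_of_lt_of_le one_pos hq
  have hp0 : 0 < p := lt_of_lt_of_le one_pos hp
  have hdq : (0:ℝ) ≤ (d:ℝ) ^ (1/q) := Real.rpow_nonneg (Nat.cast_nonneg d) _
  have hn' : (0:ℝ) < (n:ℝ) := by exact_mod_cast hn
  have hsn : 0 < Real.sqrt n := Real.sqrt_pos.mpr hn'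
  set c : ℝ := ε * W * (d:ℝ) ^ (1/q) with hc
  have hc0 : 0 ≤ c := by positivity
  have hL : ∀ w : Fin d → ℝ, (∑ j, |w j| ^ p) ^ (1/p) ≤ W →
      ∑ j, |w j| ≤ (d:ℝ)^(1/q) * W :=
    fun w hw => le_trans (holder_l1 w hp hq hpq) (mul_le_mul_of_nonneg_left hw hdq)
  set V := {v : Fin n → ℝ | ∃ w : Fin d → ℝ,
      (∑ j, |w j| ^ p) ^ (1 / p) ≤ W ∧ ∀ i, v i = ∑ j, x i j * w j} with hV
  have hVadv : {v : Fin n → ℝ | ∃ w : Fin d → ℝ,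
        (∑ j, |w j| ^ p) ^ (1 / p) ≤ W ∧
        ∀ i, v i = sInf {t : ℝ | ∃ x' : Fin d → ℝ,
          (∀ j, |x' j - x i j| ≤ ε) ∧ t = y i * ∑ j, x' j * w j}}
      = {v : Fin n → ℝ | ∃ w : Fin d → ℝ, (∑ j, |w j| ^ p) ^ (1 / p) ≤ W ∧
          ∀ i, v i = y i * (∑ j, x i j * w j) - ε * ∑ j, |w j|} := by
    ext v
    constructor
    · rintro ⟨w, hw, hv⟩
      exact ⟨w, hw, fun i => (hv i).trans (sInf_adv (x i) w (hy i) hε)⟩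
    · rintro ⟨w, hw, hv⟩
      exact ⟨w, hw, fun i => (hv i).trans (sInf_adv (x i) w (hy i) hε).symm⟩
  rw [hVadv]
  set Vadv := {v : Fin n → ℝ | ∃ w : Fin d → ℝ, (∑ j, |w j| ^ p) ^ (1 / p) ≤ W ∧
      ∀ i, v i = y i * (∑ j, x i j * w j) - ε * ∑ j, |w j|} with hVadv'
  have h0w : ((∑ _j : Fin d, |(0:ℝ)| ^ p) ^ (1 / p) : ℝ) ≤ W := by
    simp only [abs_zero, Real.zero_rpow hp0.ne', Finset.sum_const_zero]
    rw [Real.zero_rpow (by positivity)]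
    exact hW.le
  -- upper bound for V-sets
  set B : ℝ := (∑ i, ∑ j, |x i j|) * ((d:ℝ)^(1/q) * W) with hB
  have hub : ∀ σ : Fin n → Bool, ∀ s ∈
      {s : ℝ | ∃ v ∈ V, s = ∑ i, (if σ i then (1:ℝ) else -1) * v i}, s ≤ B := by
    rintro σ s ⟨v, ⟨w, hw, hv⟩, rfl⟩
    have habs : ∀ i, (if σ i then (1:ℝ) else -1) * v i ≤ |v i| := by
      intro i
      by_cases h : σ i
      · simp [h, le_abs_self]
      · simpa [h] using neg_le_abs (v i)
    have hwj : ∀ j, |w j| ≤ (d:ℝ)^(1/q) * W := fun j =>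
      le_trans (Finset.single_le_sum (f := fun j => |w j|)
        (fun j _ => abs_nonneg _) (Finset.mem_univ j)) (hL w hw)
    calc ∑ i, (if σ i then (1:ℝ) else -1) * v i ≤ ∑ i, |v i| :=
          Finset.sum_le_sum fun i _ => habs i
      _ ≤ ∑ i, ∑ j, |x i j| * ((d:ℝ)^(1/q) * W) := by
          refine Finset.sum_le_sum fun i _ => ?_
          rw [hv i]
          refine le_trans (Finset.abs_sum_le_sum_abs _ _) (Finset.sum_le_sum fun j _ => ?_)
          rw [abs_mul]
          exact mul_le_mul_of_nonneg_left (hwj j) (abs_nonneg _)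
      _ = B := by
          rw [hB, Finset.sum_mul]
          exact Finset.sum_congr rfl fun i _ => by rw [Finset.sum_mul]
  have hbddV : ∀ σ : Fin n → Bool,
      BddAbove {s : ℝ | ∃ v ∈ V, s = ∑ i, (if σ i then (1:ℝ) else -1) * v i} :=
    fun σ => ⟨B, fun s hs => hub σ s hs⟩
  have hneV : ∀ σ : Fin n → Bool,
      ((fun τ : Fin n → Bool => {s : ℝ | ∃ v ∈ Vadv, s = ∑ i, (if τ i then (1:ℝ) else -1) * v i}) σ).Nonempty := by
    intro σ
    refine ⟨0, fun _ => 0, ⟨0, by simpa using h0w, fun i => by simp⟩, by simp⟩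
  -- the flip map
  classical
  set e : (Fin n → Bool) → (Fin n → Bool) := fun σ i => if y i = 1 then σ i else !(σ i) with he
  have hinv : Function.Involutive e := by
    intro σ; funext i; by_cases h : y i = 1 <;> simp [he, h]
  have hflip : ∀ (σ : Fin n → Bool) (i : Fin n),
      (if e σ i then (1:ℝ) else -1) = (if σ i then (1:ℝ) else -1) * y i := by
    intro σ i
    rcases hy i with h | h <;> by_cases hσ : σ i <;>
      norm_num [he, h, hσ]
  have hstep : ∀ σ : Fin n → Bool,
      sSup {s : ℝ | ∃ v ∈ Vadv, s = ∑ i, (if σ i then (1:ℝ) else -1) * v i}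
        ≤ sSup {s : ℝ | ∃ v ∈ V, s = ∑ i, (if e σ i then (1:ℝ) else -1) * v i}
          + c * |∑ i, (if σ i then (1:ℝ) else -1)| := by
    intro σ
    refine csSup_le (hneV σ) ?_
    rintro s ⟨v, ⟨w, hw, hv⟩, rfl⟩
    have hexp : ∀ i, (if σ i then (1:ℝ) else -1) * v i
        = (if e σ i then (1:ℝ) else -1) * (∑ j, x i j * w j)
          - (ε * ∑ j, |w j|) * (if σ i then (1:ℝ) else -1) := by
      intro i; rw [hv i, hflip σ i]; ring
    rw [Finset.sum_congr rfl (fun i _ => hexp i), Finset.sum_sub_distrib, ← Finset.mul_sum]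
    have h1 : ∑ i, (if e σ i then (1:ℝ) else -1) * (∑ j, x i j * w j)
        ≤ sSup {s : ℝ | ∃ v ∈ V, s = ∑ i, (if e σ i then (1:ℝ) else -1) * v i} :=
      le_csSup (hbddV (e σ)) ⟨fun i => ∑ j, x i j * w j, ⟨w, hw, fun i => rfl⟩, rfl⟩
    have h2 : -((ε * ∑ j, |w j|) * ∑ i, (if σ i then (1:ℝ) else -1))
        ≤ c * |∑ i, (if σ i then (1:ℝ) else -1)| := by
      have hLw : 0 ≤ ∑ j, |w j| := Finset.sum_nonneg fun j _ => abs_nonneg _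
      refine le_trans (neg_le_abs _) ?_
      rw [abs_mul, abs_mul, abs_of_pos hε, abs_of_nonneg hLw]
      have : ε * ∑ j, |w j| ≤ c := by
        rw [hc]
        calc ε * ∑ j, |w j| ≤ ε * ((d:ℝ)^(1/q) * W) :=
              mul_le_mul_of_nonneg_left (hL w hw) hε.le
          _ = ε * W * (d:ℝ)^(1/q) := by ring
      exact mul_le_mul_of_nonneg_right this (abs_nonneg _)
    calc _ ≤ sSup {s : ℝ | ∃ v ∈ V, s = ∑ i, (if e σ i then (1:ℝ) else -1) * v i}
          + -((ε * ∑ j, |w j|) * ∑ i, (if σ i then (1:ℝ) else -1)) := by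
            rw [sub_eq_add_neg]; exact add_le_add_left h1 _
      _ ≤ _ := add_le_add_right h2 _
  have hsum : ∑ σ : Fin n → Bool,
      sSup {s : ℝ | ∃ v ∈ Vadv, s = ∑ i, (if σ i then (1:ℝ) else -1) * v i}
      ≤ (∑ σ : Fin n → Bool,
          sSup {s : ℝ | ∃ v ∈ V, s = ∑ i, (if σ i then (1:ℝ) else -1) * v i})
        + c * (2 ^ n * Real.sqrt n) := by
    calc ∑ σ : Fin n → Bool,
        sSup {s : ℝ | ∃ v ∈ Vadv, s = ∑ i, (if σ i then (1:ℝ) else -1) * v i}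
        ≤ ∑ σ : Fin n → Bool,
          (sSup {s : ℝ | ∃ v ∈ V, s = ∑ i, (if e σ i then (1:ℝ) else -1) * v i}
            + c * |∑ i, (if σ i then (1:ℝ) else -1)|) :=
          Finset.sum_le_sum fun σ _ => hstep σ
      _ = (∑ σ : Fin n → Bool,
            sSup {s : ℝ | ∃ v ∈ V, s = ∑ i, (if e σ i then (1:ℝ) else -1) * v i})
          + c * ∑ σ : Fin n → Bool, |∑ i, (if σ i then (1:ℝ) else -1)| := by
          rw [Finset.sum_add_distrib, Finset.mul_sum]
      _ = (∑ σ : Fin n → Bool,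
            sSup {s : ℝ | ∃ v ∈ V, s = ∑ i, (if σ i then (1:ℝ) else -1) * v i})
          + c * ∑ σ : Fin n → Bool, |∑ i, (if σ i then (1:ℝ) else -1)| := by
          rw [hinv.bijective.sum_comp (fun τ : Fin n → Bool =>
            sSup {s : ℝ | ∃ v ∈ V, s = ∑ i, (if τ i then (1:ℝ) else -1) * v i})]
      _ ≤ _ := add_le_add_right
          (mul_le_mul_of_nonneg_left (sum_abs_signs_le n) hc0) _
  -- final arithmetic
  have hk0 : (0:ℝ) ≤ (n:ℝ)⁻¹ * ((2:ℝ)^n)⁻¹ := by positivity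
  have hkey : (n:ℝ)⁻¹ * ((2:ℝ)^n)⁻¹ * (c * (2 ^ n * Real.sqrt n)) = c / Real.sqrt n := by
    rw [eq_div_iff hsn.ne']
    have h2n : ((2:ℝ)^n) ≠ 0 := by positivity
    have hss : Real.sqrt n * Real.sqrt n = (n:ℝ) := Real.mul_self_sqrt hn'.le
    field_simp
    linear_combination (ε * W * (d:ℝ) ^ (1 / q)) * hss
  show (n : ℝ)⁻¹ * ((2 : ℝ) ^ n)⁻¹ * _ ≤ (n : ℝ)⁻¹ * ((2 : ℝ) ^ n)⁻¹ * _ + c / Real.sqrt n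
  calc (n : ℝ)⁻¹ * ((2 : ℝ) ^ n)⁻¹ *
        ∑ σ : Fin n → Bool,
          sSup {s : ℝ | ∃ v ∈ Vadv, s = ∑ i, (if σ i then (1:ℝ) else -1) * v i}
      ≤ (n : ℝ)⁻¹ * ((2 : ℝ) ^ n)⁻¹ *
        ((∑ σ : Fin n → Bool,
          sSup {s : ℝ | ∃ v ∈ V, s = ∑ i, (if σ i then (1:ℝ) else -1) * v i})
          + c * (2 ^ n * Real.sqrt n)) := mul_le_mul_of_nonneg_left hsum hk0
    _ = (n : ℝ)⁻¹ * ((2 : ℝ) ^ n)⁻¹ *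
        (∑ σ : Fin n → Bool,
          sSup {s : ℝ | ∃ v ∈ V, s = ∑ i, (if σ i then (1:ℝ) else -1) * v i})
        + (n:ℝ)⁻¹ * ((2:ℝ)^n)⁻¹ * (c * (2 ^ n * Real.sqrt n)) := by ring
    _ = _ + c / Real.sqrt n := by rw [hkey]
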